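/- Let ε > 0, ℓ > 0, u₋ < u₊, and let f : ℝ → ℝ be continuously differentiable on [u₋, u₊]. Set m = min_{[u₋,u₊]} f and M = max_{[u₋,u₊]} f, and assume M − m < ε. Define Φ(C) = ∫_{u₋}^{u₊} √(ε² − (f(u)+C)²) / (f(u)+C) du for C ∈ (−m, ε−M), and c_I = ∫_{u₋}^{u₊} √( (M − f(u)) (f(u) + 2ε − M) ) / (f(u) + ε − M) du. Then there exists a unique C ∈ (−m, ε−M) with Φ(C) = 2ℓ if and only if 2ℓ > c_I. -/

import Mathlib

open Set

lemma log_integral_aux {s L η : ℝ} (c : ℝ) (hs : 0 < s) (hL : 0 < L) (hη : 0 ≤ η) :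
    ∫ t in (0:ℝ)..η, c / (s + L * t) = c / L * (Real.log (s + L * η) - Real.log s) := by
  have hpos : ∀ t ∈ Set.uIcc (0:ℝ) η, 0 < s + L * t := by
    intro t ht
    rw [Set.uIcc_of_le hη] at ht
    nlinarith [ht.1]
  have hderiv : ∀ t ∈ Set.uIcc (0:ℝ) η,
      HasDerivAt (fun t => c / L * Real.log (s + L * t)) (c / (s + L * t)) t := by
    intro t ht
    have h1 : HasDerivAt (fun t : ℝ => s + L * t) L t := by
      simpa using ((hasDerivAt_id t).const_mul L).const_add s
    have h2 := (Real.hasDerivAt_log (hpos t ht).ne').comp t h1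
    have h3 := h2.const_mul (c / L)
    refine h3.congr_deriv ?_
    have hne := (hpos t ht).ne'
    field_simp
  have hint : IntervalIntegrable (fun t => c / (s + L * t)) MeasureTheory.volume 0 η := by
    apply ContinuousOn.intervalIntegrable
    apply ContinuousOn.div continuousOn_const (by fun_prop)
    intro t ht; exact (hpos t ht).ne'
  have := intervalIntegral.integral_eq_sub_of_hasDerivAt hderiv hint
  rw [this]
  simp
  ring

set_option maxHeartbeats 2000000 in
/-- there exists a unique `C ∈ (−m, ε−M)` with `Φ(C) = 2ℓ` iff `2ℓ > c_I`. -/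
theorem exists_unique_C_iff
    (ε ℓ um up : ℝ) (hε : 0 < ε) (hℓ : 0 < ℓ) (hlt : um < up)
    (f : ℝ → ℝ) (hf : ContDiffOn ℝ 1 f (Set.Icc um up))
    (m M : ℝ)
    (hm : IsLeast (f '' Set.Icc um up) m)
    (hM : IsGreatest (f '' Set.Icc um up) M)
    (hMm : M - m < ε)
    (Φ : ℝ → ℝ)
    (hΦ : ∀ C : ℝ, Φ C = ∫ u in um..up, Real.sqrt (ε ^ 2 - (f u + C) ^ 2) / (f u + C)) :
    (∃! C : ℝ, C ∈ Set.Ioo (-m) (ε - M) ∧ Φ C = 2 * ℓ) ↔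
      2 * ℓ > ∫ u in um..up,
        Real.sqrt ((M - f u) * (f u + 2 * ε - M)) / (f u + ε - M) := by
  -- basic bounds
  have hfm : ∀ u ∈ Set.Icc um up, m ≤ f u := fun u hu => hm.2 ⟨u, hu, rfl⟩
  have hfM : ∀ u ∈ Set.Icc um up, f u ≤ M := fun u hu => hM.2 ⟨u, hu, rfl⟩
  obtain ⟨u₀, hu₀I, hfu₀⟩ := hm.1
  have hmM : m ≤ M := hfu₀ ▸ hfM u₀ hu₀I
  have horder : -m < ε - M := by linarith
  -- clamp
  set clamp : ℝ → ℝ := fun u => min (max u um) up with hclampdef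
  have hclamp_mem : ∀ u, clamp u ∈ Set.Icc um up := by
    intro u
    constructor
    · exact le_min (le_max_right u um) hlt.le
    · exact min_le_right _ _
  have hclamp_eq : ∀ u ∈ Set.Icc um up, clamp u = u := by
    intro u hu
    simp only [hclampdef]
    rw [max_eq_left hu.1, min_eq_left hu.2]
  have hclamp_cont : Continuous clamp := by fun_prop
  set fc : ℝ → ℝ := fun u => f (clamp u) with hfcdef
  have hfc_cont : Continuous fc :=
    hf.continuousOn.comp_continuous hclamp_cont hclamp_mem
  have hfc_eq : ∀ u ∈ Set.Icc um up, fc u = f u := fun u hu => by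
    simp only [hfcdef]; rw [hclamp_eq u hu]
  have hfc_lb : ∀ u, m ≤ fc u := fun u => hfm _ (hclamp_mem u)
  have hfc_ub : ∀ u, fc u ≤ M := fun u => hfM _ (hclamp_mem u)
  -- the regularized integrand and integral
  set G : ℝ → ℝ → ℝ := fun C u => Real.sqrt (ε ^ 2 - (fc u + C) ^ 2) / (fc u + C) with hGdef
  set F : ℝ → ℝ := fun C => ∫ u in um..up, G C u with hFdef
  have hΦF : ∀ C, Φ C = F C := by
    intro C
    rw [hΦ]
    apply intervalIntegral.integral_congr
    intro u hu
    rw [Set.uIcc_of_le hlt.le] at hu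
    simp only [hGdef, hfc_eq u hu]
  have hcI : (∫ u in um..up,
      Real.sqrt ((M - f u) * (f u + 2 * ε - M)) / (f u + ε - M)) = F (ε - M) := by
    apply intervalIntegral.integral_congr
    intro u hu
    rw [Set.uIcc_of_le hlt.le] at hu
    simp only [hGdef, hfc_eq u hu]
    have h1 : (M - f u) * (f u + 2 * ε - M) = ε ^ 2 - (f u + (ε - M)) ^ 2 := by ring
    have h2 : f u + ε - M = f u + (ε - M) := by ring
    rw [h1, h2]
  -- continuity of each G C and positivity of denominators
  have hden : ∀ C u, -m < C → 0 < fc u + C := fun C u hC => by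
    have := hfc_lb u; linarith
  have hGC_cont : ∀ C, -m < C → Continuous (G C) := by
    intro C hC
    apply Continuous.div
    · exact Real.continuous_sqrt.comp (by fun_prop)
    · fun_prop
    · exact fun u => (hden C u hC).ne'
  have hGnonneg : ∀ C u, -m < C → 0 ≤ G C u := fun C u hC =>
    div_nonneg (Real.sqrt_nonneg _) (hden C u hC).le
  -- strict antitonicity
  have hInt : ∀ C, -m < C → ∀ a b : ℝ, IntervalIntegrable (G C) MeasureTheory.volume a b :=
    fun C hC a b => (hGC_cont C hC).intervalIntegrable a b
  have hanti : ∀ C₁ C₂, -m < C₁ → C₁ < C₂ → C₂ ≤ ε - M → F C₂ < F C₁ := by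
    intro C₁ C₂ hC₁ h12 hC₂
    have hC₂' : -m < C₂ := hC₁.trans h12
    have key : ∀ u, G C₂ u < G C₁ u := by
      intro u
      have ht₁ : 0 < fc u + C₁ := hden C₁ u hC₁
      have ht₂ : fc u + C₁ < fc u + C₂ := by linarith
      have htε : fc u + C₂ ≤ ε := by have := hfc_ub u; linarith
      have hnum : 0 < ε ^ 2 - (fc u + C₁) ^ 2 := by nlinarith
      have h1 : Real.sqrt (ε ^ 2 - (fc u + C₂) ^ 2) / (fc u + C₂)
          ≤ Real.sqrt (ε ^ 2 - (fc u + C₁) ^ 2) / (fc u + C₂) := by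
        gcongr √?_ / ?_
        · exact (hden C₂ u hC₂').le
        · nlinarith
      have h2 : Real.sqrt (ε ^ 2 - (fc u + C₁) ^ 2) / (fc u + C₂)
          < Real.sqrt (ε ^ 2 - (fc u + C₁) ^ 2) / (fc u + C₁) :=
        div_lt_div_of_pos_left (Real.sqrt_pos.2 hnum) ht₁ ht₂
      exact lt_of_le_of_lt h1 h2
    have hpos : 0 < ∫ u in um..up, (G C₁ u - G C₂ u) := by
      apply intervalIntegral.intervalIntegral_pos_of_pos_on
        ((hInt C₁ hC₁ um up).sub (hInt C₂ hC₂' um up))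
        (fun u _ => sub_pos.2 (key u)) hlt
    rw [intervalIntegral.integral_sub (hInt C₁ hC₁ um up) (hInt C₂ hC₂' um up)] at hpos
    simp only [hFdef]
    linarith
  -- continuity of F
  have hFcont : ∀ c₁, -m < c₁ → ContinuousOn F (Set.Ici c₁) := by
    intro c₁ hc₁
    have hdenc : ∀ p : ℝ × ℝ, 0 < fc p.2 + max p.1 c₁ :=
      fun p => hden _ _ (lt_of_lt_of_le hc₁ (le_max_right _ _))
    have hcont : Continuous (Function.uncurry fun (C u : ℝ) =>
        Real.sqrt (ε ^ 2 - (fc u + max C c₁) ^ 2) / (fc u + max C c₁)) := by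
      apply Continuous.div
      · exact Real.continuous_sqrt.comp (by fun_prop)
      · fun_prop
      · exact fun p => (hdenc p).ne'
    have h := intervalIntegral.continuous_parametric_intervalIntegral_of_continuous'
      (μ := MeasureTheory.volume) hcont um up
    apply h.continuousOn.congr
    intro C hC
    simp only [hFdef, hGdef]
    rw [max_eq_left hC]
  -- blow-up near -m
  have blow : ∃ C, -m < C ∧ C < ε - M ∧ 2 * ℓ < F C := by
    -- Lipschitz bound from C¹
    have hudiff : UniqueDiffOn ℝ (Set.Icc um up) := uniqueDiffOn_Icc hlt
    have hfd : ContinuousOn (fderivWithin ℝ f (Set.Icc um up)) (Set.Icc um up) :=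
      hf.continuousOn_fderivWithin hudiff le_rfl
    obtain ⟨B, hB⟩ := isCompact_Icc.exists_bound_of_continuousOn hfd
    set L : ℝ := max B 0 + 1 with hLdef
    have hL : 0 < L := by positivity
    have hlip : LipschitzOnWith L.toNNReal f (Set.Icc um up) := by
      refine Convex.lipschitzOnWith_of_nnnorm_fderivWithin_le
        (hf.differentiableOn one_ne_zero) (fun x hx => ?_) (convex_Icc um up)
      rw [← NNReal.coe_le_coe, coe_nnnorm, Real.coe_toNNReal _ hL.le]
      calc ‖fderivWithin ℝ f (Set.Icc um up) x‖ ≤ B := hB x hx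
        _ ≤ L := by simp only [hLdef]; nlinarith [le_max_left B (0:ℝ)]
    have hflip : ∀ x ∈ Set.Icc um up, ∀ y ∈ Set.Icc um up, f x - f y ≤ L * |x - y| := by
      intro x hx y hy
      have h1 := hlip.dist_le_mul x hx y hy
      rw [Real.dist_eq, Real.dist_eq, Real.coe_toNNReal _ hL.le] at h1
      calc f x - f y ≤ |f x - f y| := le_abs_self _
        _ ≤ L * |x - y| := h1
    -- geometric parameters
    set η : ℝ := min (ε / (4 * L)) ((up - um) / 2) with hηdef
    have hη : 0 < η := lt_min (by positivity) (by linarith)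
    have hLη : L * η ≤ ε / 4 := by
      have h1 : η ≤ ε / (4 * L) := min_le_left _ _
      have h2 : L * η ≤ L * (ε / (4 * L)) := by nlinarith
      calc L * η ≤ L * (ε / (4 * L)) := h2
        _ = ε / 4 := by field_simp
    have hη2 : η ≤ (up - um) / 2 := min_le_right _ _
    set E : ℝ := Real.exp (4 * ℓ * L / ε) with hEdef
    have hE1 : 1 < E := by
      have h0 : (0:ℝ) < 4 * ℓ * L / ε := by positivity
      have := Real.add_one_le_exp (4 * ℓ * L / ε)
      simp only [hEdef]; linarith
    have hX : 0 < min (min ((ε - M) - (-m)) (ε / 4)) (L * η / (E - 1)) := by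
      apply lt_min (lt_min (by linarith) (by positivity))
      have : 0 < E - 1 := by linarith
      positivity
    set s : ℝ := min (min ((ε - M) - (-m)) (ε / 4)) (L * η / (E - 1)) / 2 with hsdef
    have hs : 0 < s := by positivity
    have hshalf : s < min (min ((ε - M) - (-m)) (ε / 4)) (L * η / (E - 1)) :=
      half_lt_self hX
    have hs1 : s < (ε - M) - (-m) :=
      lt_of_lt_of_le hshalf (le_trans (min_le_left _ _) (min_le_left _ _))
    have hs2 : s ≤ ε / 4 :=
      le_of_lt (lt_of_lt_of_le hshalf (le_trans (min_le_left _ _) (min_le_right _ _)))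
    have hs3 : s * (E - 1) < L * η := by
      have h1 : s < L * η / (E - 1) := lt_of_lt_of_le hshalf (min_le_right _ _)
      have h2 : 0 < E - 1 := by linarith
      calc s * (E - 1) < (L * η / (E - 1)) * (E - 1) := by nlinarith
        _ = L * η := by field_simp
    set C : ℝ := s - m with hCdef
    have hCm : -m < C := by simp only [hCdef]; linarith
    have hCM : C < ε - M := by simp only [hCdef]; linarith
    clear_value L η E s C
    -- the logarithmic lower bound value
    have hlog : 4 * ℓ * L / ε < Real.log (s + L * η) - Real.log s := by
      have hsLη : 0 < s + L * η := by positivity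
      rw [← Real.log_div hsLη.ne' hs.ne']
      rw [Real.lt_log_iff_exp_lt (by positivity)]
      rw [lt_div_iff₀ hs]
      simp only [← hEdef]
      nlinarith
    have hval : 2 * ℓ < ε / 2 / L * (Real.log (s + L * η) - Real.log s) := by
      have hpos : 0 < ε / 2 / L := by positivity
      have heq : ε / 2 / L * (4 * ℓ * L / ε) = 2 * ℓ := by field_simp; ring
      calc 2 * ℓ = ε / 2 / L * (4 * ℓ * L / ε) := heq.symm
        _ < ε / 2 / L * (Real.log (s + L * η) - Real.log s) :=
            mul_lt_mul_of_pos_left hlog hpos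
    -- key: the integral over a good subinterval exceeds 2ℓ
    obtain ⟨u₀', hu₀I', hfu₀'⟩ : ∃ u ∈ Set.Icc um up, f u = m := ⟨u₀, hu₀I, hfu₀⟩
    have hmain : ∃ a b : ℝ, um ≤ a ∧ a < b ∧ b ≤ up ∧
        2 * ℓ < ∫ u in a..b, G C u := by
      rcases le_or_gt u₀' ((um + up) / 2) with hside | hside
      · -- subinterval to the right of the minimizer
        refine ⟨u₀', u₀' + η, hu₀I'.1, by linarith, by linarith [hu₀I'.1], ?_⟩
        have hsub : Set.Icc u₀' (u₀' + η) ⊆ Set.Icc um up := by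
          apply Set.Icc_subset_Icc hu₀I'.1; linarith [hu₀I'.1]
        have hbd : ∀ u ∈ Set.Icc u₀' (u₀' + η),
            ε / 2 / (s + L * (u - u₀')) ≤ G C u := by
          intro u hu
          have huI : u ∈ Set.Icc um up := hsub hu
          have hfu : f u - m ≤ L * (u - u₀') := by
            have := hflip u huI u₀' hu₀I'
            rw [hfu₀', abs_of_nonneg (by linarith [hu.1])] at this
            linarith
          have hdenpos : 0 < fc u + C := hden C u hCm
          have hfcu : fc u = f u := hfc_eq u huI
          have hub : fc u + C ≤ s + L * (u - u₀') := by
            rw [hfcu]; simp only [hCdef]; linarith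
          have hub2 : fc u + C ≤ ε / 2 := by
            have h1 : L * (u - u₀') ≤ L * η := by nlinarith [hu.1, hu.2]
            linarith
          have hnum : ε / 2 ≤ Real.sqrt (ε ^ 2 - (fc u + C) ^ 2) := by
            rw [show ε / 2 = Real.sqrt ((ε/2)^2) from (Real.sqrt_sq (by positivity)).symm]
            apply Real.sqrt_le_sqrt; nlinarith
          calc ε / 2 / (s + L * (u - u₀')) ≤ ε / 2 / (fc u + C) :=
                div_le_div_of_nonneg_left (by positivity) hdenpos hub
            _ ≤ Real.sqrt (ε ^ 2 - (fc u + C) ^ 2) / (fc u + C) :=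
                (div_le_div_iff_of_pos_right hdenpos).mpr hnum
            _ = G C u := rfl
        have hint1 : IntervalIntegrable (fun u => ε / 2 / (s + L * (u - u₀')))
            MeasureTheory.volume u₀' (u₀' + η) := by
          apply ContinuousOn.intervalIntegrable
          apply ContinuousOn.div continuousOn_const (by fun_prop)
          intro u hu
          rw [Set.uIcc_of_le (by linarith)] at hu
          nlinarith [hu.1]
        have hmono := intervalIntegral.integral_mono_on (by linarith : u₀' ≤ u₀' + η)
          hint1 ((hGC_cont C hCm).intervalIntegrable _ _) hbd
        have hcomp : (∫ u in u₀'..(u₀' + η), ε / 2 / (s + L * (u - u₀')))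
            = ∫ t in (0:ℝ)..η, ε / 2 / (s + L * t) := by
          have h := intervalIntegral.integral_comp_sub_right
            (a := u₀') (b := u₀' + η) (fun t => ε / 2 / (s + L * t)) u₀'
          simpa using h
        rw [hcomp, log_integral_aux (ε/2) hs hL hη.le] at hmono
        linarith
      · -- subinterval to the left of the minimizer
        refine ⟨u₀' - η, u₀', by linarith, by linarith, hu₀I'.2, ?_⟩
        have hsub : Set.Icc (u₀' - η) u₀' ⊆ Set.Icc um up := by
          apply Set.Icc_subset_Icc ?_ hu₀I'.2; linarith
        have hbd : ∀ u ∈ Set.Icc (u₀' - η) u₀',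
            ε / 2 / (s + L * (u₀' - u)) ≤ G C u := by
          intro u hu
          have huI : u ∈ Set.Icc um up := hsub hu
          have hfu : f u - m ≤ L * (u₀' - u) := by
            have h := hflip u huI u₀' hu₀I'
            rw [hfu₀', abs_of_nonpos (by linarith [hu.2]), neg_sub] at h
            linarith
          have hdenpos : 0 < fc u + C := hden C u hCm
          have hfcu : fc u = f u := hfc_eq u huI
          have hub : fc u + C ≤ s + L * (u₀' - u) := by
            rw [hfcu]; simp only [hCdef]; linarith
          have hub2 : fc u + C ≤ ε / 2 := by
            have h1 : L * (u₀' - u) ≤ L * η := by nlinarith [hu.1, hu.2]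
            linarith
          have hnum : ε / 2 ≤ Real.sqrt (ε ^ 2 - (fc u + C) ^ 2) := by
            rw [show ε / 2 = Real.sqrt ((ε/2)^2) from (Real.sqrt_sq (by positivity)).symm]
            apply Real.sqrt_le_sqrt; nlinarith
          calc ε / 2 / (s + L * (u₀' - u)) ≤ ε / 2 / (fc u + C) :=
                div_le_div_of_nonneg_left (by positivity) hdenpos hub
            _ ≤ Real.sqrt (ε ^ 2 - (fc u + C) ^ 2) / (fc u + C) :=
                (div_le_div_iff_of_pos_right hdenpos).mpr hnum
            _ = G C u := rfl
        have hint1 : IntervalIntegrable (fun u => ε / 2 / (s + L * (u₀' - u)))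
            MeasureTheory.volume (u₀' - η) u₀' := by
          apply ContinuousOn.intervalIntegrable
          apply ContinuousOn.div continuousOn_const (by fun_prop)
          intro u hu
          rw [Set.uIcc_of_le (by linarith)] at hu
          nlinarith [hu.2]
        have hmono := intervalIntegral.integral_mono_on (by linarith : u₀' - η ≤ u₀')
          hint1 ((hGC_cont C hCm).intervalIntegrable _ _) hbd
        have hcomp : (∫ u in (u₀' - η)..u₀', ε / 2 / (s + L * (u₀' - u)))
            = ∫ t in (0:ℝ)..η, ε / 2 / (s + L * t) := by
          have h := intervalIntegral.integral_comp_sub_left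
            (a := u₀' - η) (b := u₀') (fun t => ε / 2 / (s + L * t)) u₀'
          simpa using h
        rw [hcomp, log_integral_aux (ε/2) hs hL hη.le] at hmono
        linarith
    obtain ⟨a, b, hua, hab, hbu, hint⟩ := hmain
    refine ⟨C, hCm, hCM, ?_⟩
    have e1 := intervalIntegral.integral_add_adjacent_intervals
      (hInt C hCm um a) (hInt C hCm a b)
    have e2 := intervalIntegral.integral_add_adjacent_intervals
      (hInt C hCm um b) (hInt C hCm b up)
    have n1 : 0 ≤ ∫ u in um..a, G C u :=
      intervalIntegral.integral_nonneg hua (fun u _ => hGnonneg C u hCm)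
    have n2 : 0 ≤ ∫ u in b..up, G C u :=
      intervalIntegral.integral_nonneg hbu (fun u _ => hGnonneg C u hCm)
    simp only [hFdef]
    linarith
  -- conclusion
  rw [hcI]
  constructor
  · rintro ⟨C, ⟨⟨hC1, hC2⟩, hFC⟩, -⟩
    rw [hΦF] at hFC
    have := hanti C (ε - M) hC1 hC2 le_rfl
    rw [hFC] at this
    exact this
  · intro hlow
    obtain ⟨C₁, hC₁1, hC₁2, hC₁F⟩ := blow
    have hcts : ContinuousOn F (Set.Icc C₁ (ε - M)) :=
      (hFcont C₁ hC₁1).mono Set.Icc_subset_Ici_self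
    have hmem : 2 * ℓ ∈ Set.Icc (F (ε - M)) (F C₁) := ⟨hlow.le, hC₁F.le⟩
    obtain ⟨C, hCmem, hFC⟩ := intermediate_value_Icc' hC₁2.le hcts hmem
    have hC1 : -m < C := lt_of_lt_of_le hC₁1 hCmem.1
    have hC2 : C < ε - M := by
      rcases lt_or_eq_of_le hCmem.2 with h | h
      · exact h
      · exfalso; rw [h] at hFC; rw [hFC] at hlow; exact lt_irrefl _ hlow
    refine ⟨C, ⟨⟨hC1, hC2⟩, by rw [hΦF]; exact hFC⟩, ?_⟩
    rintro C' ⟨⟨hC'1, hC'2⟩, hFC'⟩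
    rw [hΦF] at hFC'
    rcases lt_trichotomy C' C with h | h | h
    · have := hanti C' C hC'1 h hC2.le
      rw [hFC, hFC'] at this; exact absurd this (lt_irrefl _)
    · exact h
    · have := hanti C C' hC1 h hC'2.le
      rw [hFC, hFC'] at this; exact absurd this (lt_irrefl _)
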